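/- Let (X,d) be a finite nonempty ultrametric space. Then (X,d) belongs to the class UGVL if and only if every open ball of (X,d) is a centered sphere of (X,d). -/

import Mathlib

/-- `d` is an ultrametric on `X`: a nonnegative, symmetric function vanishing
exactly on the diagonal and satisfying the strong triangle inequality. -/
def IsUltrametricOn {X : Type*} (d : X → X → ℝ) : Prop :=
  (∀ x y, 0 ≤ d x y) ∧ (∀ x y, d x y = d y x) ∧
  (∀ x y, d x y = 0 ↔ x = y) ∧
  (∀ x y z, d x y ≤ max (d x z) (d z y))

/-- `B` is an open ball of the space `(X, d)`. -/
def IsOpenBallOf {X : Type*} (d : X → X → ℝ) (B : Set X) : Prop :=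
  ∃ c : X, ∃ r : ℝ, 0 < r ∧ B = {x | d c x < r}

/-- `C` is a centered sphere of the space `(X, d)`. -/
def IsCenteredSphereOf {X : Type*} (d : X → X → ℝ) (C : Set X) : Prop :=
  ∃ c ∈ C, ∃ r : ℝ, 0 ≤ r ∧ C = {x | d x c = r} ∪ {c}

/-- The diameter `sup {d x y : x, y ∈ A}` of a subset `A` of `(X, d)`. -/
noncomputable def setDiam {X : Type*} (d : X → X → ℝ) (A : Set X) : ℝ :=
  sSup {r | ∃ x ∈ A, ∃ y ∈ A, r = d x y}

/-- A space is locally finite if all of its open balls are finite sets. -/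
def IsLocallyFiniteOn {X : Type*} (d : X → X → ℝ) : Prop :=
  ∀ B : Set X, IsOpenBallOf d B → B.Finite

/-- The maximum of the (nonnegative) labels of the vertices of a walk `p`. -/
def walkMax {X : Type*} {T : SimpleGraph X} (l : X → ℝ) {u v : X} (p : T.Walk u v) : ℝ :=
  (p.support.map l).foldr max 0

/-- The function `d` is generated by the tree `T` with nonnegative vertex labeling `l`,
i.e. `d u u = 0` and, for `u ≠ v`, `d u v` is the maximum of the labels of the vertices
on the (unique) path joining `u` and `v` in `T`. -/
def GeneratedBy {X : Type*} (d : X → X → ℝ) (T : SimpleGraph X) (l : X → ℝ) : Prop :=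
  T.IsTree ∧ (∀ x, 0 ≤ l x) ∧ (∀ u, d u u = 0) ∧
  ∀ u v : X, u ≠ v → ∀ p : T.Walk u v, p.IsPath → d u v = walkMax l p

/-- `(X, d)` belongs to the class UGVL: it is generated by some labeled tree. -/
def IsUGVL {X : Type*} (d : X → X → ℝ) : Prop :=
  ∃ (T : SimpleGraph X) (l : X → ℝ), GeneratedBy d T l

section listlemmas

lemma foldr_max_nonneg (L : List ℝ) : 0 ≤ L.foldr max 0 := by
  induction L with
  | nil => simp
  | cons a t ih => simpa using Or.inr ih

lemma le_foldr_max {a : ℝ} {L : List ℝ} (h : a ∈ L) : a ≤ L.foldr max 0 := by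
  induction L with
  | nil => simp at h
  | cons b t ih =>
    rcases List.mem_cons.1 h with rfl | h
    · exact le_max_left _ _
    · exact le_trans (ih h) (le_max_right _ _)

lemma foldr_max_le {L : List ℝ} {m : ℝ} (h0 : 0 ≤ m) (h : ∀ a ∈ L, a ≤ m) :
    L.foldr max 0 ≤ m := by
  induction L with
  | nil => simpa
  | cons b t ih =>
    exact max_le (h b (by simp)) (ih fun a ha => h a (List.mem_cons_of_mem _ ha))

variable {X : Type*} {T : SimpleGraph X} (l : X → ℝ) {u v : X}

lemma le_walkMax {a : X} {p : T.Walk u v} (h : a ∈ p.support) : l a ≤ walkMax l p :=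
  le_foldr_max (L := p.support.map l) (List.mem_map.2 ⟨a, h, rfl⟩)

lemma walkMax_le {p : T.Walk u v} {m : ℝ} (h0 : 0 ≤ m) (h : ∀ a ∈ p.support, l a ≤ m) :
    walkMax l p ≤ m := by
  refine foldr_max_le h0 ?_
  intro b hb
  rcases List.mem_map.1 hb with ⟨a, ha, rfl⟩
  exact h a ha

lemma walkMax_nonneg (p : T.Walk u v) : 0 ≤ walkMax l p := foldr_max_nonneg _

end listlemmas

lemma forward_dir {X : Type*} [Finite X] (d : X → X → ℝ) (hd : IsUltrametricOn d)
    (hU : IsUGVL d) : ∀ B : Set X, IsOpenBallOf d B → IsCenteredSphereOf d B := by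
  classical
  obtain ⟨hpos, hsymm, hzero, hmax⟩ := hd
  obtain ⟨T, l, hG⟩ := hU
  rw [GeneratedBy] at hG
  obtain ⟨hT, hl0, hd0, hgen⟩ := hG
  rintro B ⟨c₀, r, hr, rfl⟩
  have hc₀ : d c₀ c₀ < r := by simpa [hd0 c₀] using hr
  have hBfin : {x | d c₀ x < r}.Finite := Set.toFinite _
  obtain ⟨c', hc'B, hc'max⟩ := hBfin.toFinset.exists_max_image l ⟨c₀, by simpa using hc₀⟩
  rw [Set.Finite.mem_toFinset] at hc'B
  have hc'max' : ∀ x, d c₀ x < r → l x ≤ l c' := by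
    intro x hx; exact hc'max x (by simpa using hx)
  by_cases hsing : ∀ x, d c₀ x < r → x = c'
  · refine ⟨c', hc'B, 0, le_refl 0, ?_⟩
    ext x
    simp only [Set.mem_setOf_eq, Set.mem_union, Set.mem_singleton_iff]
    constructor
    · intro hx; right; exact hsing x hx
    · rintro (h | rfl)
      · rw [hzero] at h; subst h; exact hc'B
      · exact hc'B
  · push_neg at hsing
    obtain ⟨y₀, hy₀B, hy₀ne⟩ := hsing
    have key : ∀ y, d c₀ y < r → y ≠ c' → d y c' = l c' := by
      intro y hy hyne
      obtain ⟨w⟩ := hT.isConnected.preconnected y c'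
      set p := w.toPath with hpdef
      have hp : (p : T.Walk y c').IsPath := p.2
      have hmain : d y c' = walkMax l (p : T.Walk y c') := hgen y c' hyne _ hp
      have hyc' : d y c' < r :=
        lt_of_le_of_lt (hmax y c' c₀)
          (max_lt (by rw [hsymm]; exact hy) hc'B)
      have hsupB : ∀ a ∈ (p : T.Walk y c').support, d c₀ a < r := by
        intro a ha
        have hya : d y a ≤ d y c' := by
          by_cases hay : a = y
          · subst hay
            have h0 : d a a = 0 := (hzero a a).2 rfl
            rw [h0]; exact hpos a c'
          · have hq := hp.takeUntil ha
            have heq : d y a = walkMax l ((p : T.Walk y c').takeUntil a ha) :=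
              hgen y a (Ne.symm hay) _ hq
            rw [heq, hmain]
            exact walkMax_le l (walkMax_nonneg l _) fun b hb =>
              le_walkMax l ((SimpleGraph.Walk.support_takeUntil_subset _ ha) hb)
        exact lt_of_le_of_lt (hmax c₀ a y)
          (max_lt hy (lt_of_le_of_lt hya hyc'))
      refine le_antisymm ?_ ?_
      · rw [hmain]
        exact walkMax_le l (hl0 c') fun a ha => hc'max' a (hsupB a ha)
      · rw [hmain]
        exact le_walkMax l (SimpleGraph.Walk.end_mem_support _)
    refine ⟨c', hc'B, l c', hl0 c', ?_⟩
    have hlc'r : l c' < r := by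
      rw [← key y₀ hy₀B hy₀ne]
      exact lt_of_le_of_lt (hmax y₀ c' c₀)
        (max_lt (by rw [hsymm]; exact hy₀B) hc'B)
    ext x
    simp only [Set.mem_setOf_eq, Set.mem_union, Set.mem_singleton_iff]
    constructor
    · intro hx
      by_cases hxc : x = c'
      · right; exact hxc
      · left; exact key x hx hxc
    · rintro (h | rfl)
      · have hcx : d c' x < r := by rw [hsymm, h]; exact hlc'r
        exact lt_of_le_of_lt (hmax c₀ x c') (max_lt hc'B hcx)
      · exact hc'B

section Backward

/-- Bundled data for the backward construction. -/
structure USetup (X : Type*) where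
  d : X → X → ℝ
  ctr : Set X → X
  rad : Set X → ℝ
  pos : ∀ x y, 0 ≤ d x y
  dsymm : ∀ x y, d x y = d y x
  zero : ∀ x y, d x y = 0 ↔ x = y
  ultra : ∀ x y z, d x y ≤ max (d x z) (d z y)
  hball : ∀ B : Set X, (∃ x s, 0 ≤ s ∧ B = {y | d x y ≤ s}) →
    ctr B ∈ B ∧ 0 ≤ rad B ∧ B = {x | d x (ctr B) = rad B} ∪ {ctr B}

namespace USetup

variable {X : Type*} (S : USetup X)

def cball (x : X) (s : ℝ) : Set X := {y | S.d x y ≤ s}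

def IsBall (B : Set X) : Prop := ∃ x s, 0 ≤ s ∧ B = S.cball x s

lemma refl0 (x : X) : S.d x x = 0 := (S.zero x x).2 rfl

lemma mem_cball {x y s} : y ∈ S.cball x s ↔ S.d x y ≤ s := Iff.rfl

lemma mem_cball_self {x s} (hs : 0 ≤ s) : x ∈ S.cball x s := by
  simp [mem_cball, S.refl0 x, hs]

lemma cball_eq_of_mem {x y s} (h : y ∈ S.cball x s) : S.cball x s = S.cball y s := by
  ext z
  constructor <;> intro hz
  · exact le_trans (S.ultra y z x) (max_le (by rw [← S.dsymm]; exact h) hz)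
  · exact le_trans (S.ultra x z y) (max_le h hz)

lemma cball_mono {x : X} {s t : ℝ} (h : s ≤ t) : S.cball x s ⊆ S.cball x t :=
  fun _ hz => le_trans hz h

lemma cball_nested {x y z : X} {s t : ℝ} (h1 : z ∈ S.cball x s) (h2 : z ∈ S.cball y t)
    (hst : s ≤ t) : S.cball x s ⊆ S.cball y t := by
  rw [S.cball_eq_of_mem h1, S.cball_eq_of_mem h2]
  exact S.cball_mono hst

lemma isBall_cball {x : X} {s : ℝ} (hs : 0 ≤ s) : S.IsBall (S.cball x s) := ⟨x, s, hs, rfl⟩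

lemma ball_nonempty {B : Set X} (hB : S.IsBall B) : B.Nonempty := by
  obtain ⟨x, s, hs, rfl⟩ := hB
  exact ⟨x, S.mem_cball_self hs⟩

lemma ball_eq_cball_of_mem {B : Set X} {z : X} (hB : S.IsBall B) (hz : z ∈ B) :
    ∃ s, 0 ≤ s ∧ B = S.cball z s := by
  obtain ⟨x, s, hs, rfl⟩ := hB
  exact ⟨s, hs, S.cball_eq_of_mem hz⟩

lemma ball_nested {B B' : Set X} (hB : S.IsBall B) (hB' : S.IsBall B')
    (h : (B ∩ B').Nonempty) : B ⊆ B' ∨ B' ⊆ B := by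
  obtain ⟨z, hz, hz'⟩ := h
  obtain ⟨s, _, rfl⟩ := S.ball_eq_cball_of_mem hB hz
  obtain ⟨t, _, rfl⟩ := S.ball_eq_cball_of_mem hB' hz'
  rcases le_total s t with h | h
  · exact Or.inl (S.cball_mono h)
  · exact Or.inr (S.cball_mono h)

lemma cball_subset_ball {B : Set X} {u v : X} (hB : S.IsBall B) (hu : u ∈ B) (hv : v ∈ B) :
    S.cball u (S.d u v) ⊆ B := by
  obtain ⟨s, _, rfl⟩ := S.ball_eq_cball_of_mem hB hu
  exact S.cball_mono hv

section Fin
variable [Finite X]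

lemma exists_radius (s : ℝ) : ∃ r, s < r ∧ ∀ a b : X, S.d a b < r → S.d a b ≤ s := by
  classical
  set V : Set ℝ := Set.range (fun p : X × X => S.d p.1 p.2) ∩ {v | s < v} with hV
  have hVfin : V.Finite := (Set.finite_range _).inter_of_left _
  by_cases hne : V.Nonempty
  · refine ⟨sInf V, (hne.csInf_mem hVfin).2, ?_⟩
    intro a b hab
    by_contra hcon
    push_neg at hcon
    exact absurd (csInf_le hVfin.bddBelow ⟨⟨(a, b), rfl⟩, hcon⟩) (not_le.2 hab)
  · refine ⟨s + 1, by linarith, ?_⟩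
    intro a b _
    by_contra hcon
    push_neg at hcon
    exact hne ⟨S.d a b, ⟨(a, b), rfl⟩, hcon⟩

lemma ball_isOpenBall {B : Set X} (hB : S.IsBall B) : IsOpenBallOf S.d B := by
  obtain ⟨x, s, hs, rfl⟩ := hB
  obtain ⟨r, hsr, hr⟩ := S.exists_radius s
  refine ⟨x, r, lt_of_le_of_lt hs hsr, ?_⟩
  ext y
  constructor
  · intro hy
    exact lt_of_le_of_lt hy hsr
  · intro hy
    exact hr x y hy

end Fin

lemma ctr_mem {B : Set X} (hB : S.IsBall B) : S.ctr B ∈ B := (S.hball B hB).1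

lemma rad_nonneg {B : Set X} (hB : S.IsBall B) : 0 ≤ S.rad B := (S.hball B hB).2.1

lemma d_ctr {B : Set X} {y : X} (hB : S.IsBall B) (hy : y ∈ B) (hne : y ≠ S.ctr B) :
    S.d y (S.ctr B) = S.rad B := by
  have h3 := (S.hball B hB).2.2
  rw [h3] at hy
  rcases hy with h | h
  · exact h
  · exact absurd h hne

lemma mem_of_rad {B : Set X} {y : X} (hB : S.IsBall B) (hy : S.d y (S.ctr B) = S.rad B) :
    y ∈ B := by
  have h3 := (S.hball B hB).2.2
  rw [h3]
  exact Or.inl hy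

lemma isBall_singleton (z : X) : S.IsBall {z} := by
  refine ⟨z, 0, le_refl 0, ?_⟩
  ext y
  simp only [Set.mem_singleton_iff, mem_cball]
  constructor
  · rintro rfl; exact le_of_eq (S.refl0 _)
  · intro h
    exact ((S.zero z y).1 (le_antisymm h (S.pos z y))).symm

lemma ctr_singleton (z : X) : S.ctr {z} = z := by
  have := S.ctr_mem (S.isBall_singleton z)
  simpa using this

lemma ball_unique_aux {B B' : Set X} (hB : S.IsBall B) (hB' : S.IsBall B')
    (hcc : S.ctr B = S.ctr B') (e1 : ∃ p ∈ B, p ≠ S.ctr B) (hsub : B ⊆ B') : B' ⊆ B := by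
  obtain ⟨p, hpB, hpne⟩ := e1
  have h1 : S.d p (S.ctr B) = S.rad B := S.d_ctr hB hpB hpne
  have h2 : S.d p (S.ctr B') = S.rad B' := S.d_ctr hB' (hsub hpB) (hcc ▸ hpne)
  have hrr : S.rad B = S.rad B' := by rw [← h1, ← h2, hcc]
  intro y hy
  have h3 := (S.hball B' hB').2.2
  rw [h3] at hy
  rcases hy with h | h
  · exact S.mem_of_rad hB (by rw [hcc, h, ← hrr])
  · simp only [Set.mem_singleton_iff] at h
    rw [h, ← hcc]
    exact S.ctr_mem hB

lemma ball_unique {B B' : Set X} (hB : S.IsBall B) (hB' : S.IsBall B')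
    (hcc : S.ctr B = S.ctr B') (e1 : ∃ p ∈ B, p ≠ S.ctr B) (e2 : ∃ q ∈ B', q ≠ S.ctr B') :
    B = B' := by
  have hne : (B ∩ B').Nonempty := ⟨S.ctr B, S.ctr_mem hB, hcc ▸ S.ctr_mem hB'⟩
  rcases S.ball_nested hB hB' hne with h | h
  · exact le_antisymm h (S.ball_unique_aux hB hB' hcc e1 h)
  · exact (le_antisymm h (S.ball_unique_aux hB' hB hcc.symm e2 h)).symm

open Classical in
noncomputable def Mball (z : X) : Set X :=
  if h : ∃ B, S.IsBall B ∧ S.ctr B = z ∧ ∃ p ∈ B, p ≠ z then h.choose else {z}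

lemma mball_isBall (z : X) : S.IsBall (S.Mball z) := by
  rw [Mball]
  split
  · next h => exact h.choose_spec.1
  · exact S.isBall_singleton z

lemma mball_ctr (z : X) : S.ctr (S.Mball z) = z := by
  rw [Mball]
  split
  · next h => exact h.choose_spec.2.1
  · exact S.ctr_singleton z

lemma mem_mball (z : X) : z ∈ S.Mball z := by
  have := S.ctr_mem (S.mball_isBall z)
  rwa [S.mball_ctr z] at this

lemma mball_max {B : Set X} {z : X} (hB : S.IsBall B) (hz : S.ctr B = z) : B ⊆ S.Mball z := by
  by_cases hex : ∃ p ∈ B, p ≠ z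
  · have hcond : ∃ B', S.IsBall B' ∧ S.ctr B' = z ∧ ∃ p ∈ B', p ≠ z := ⟨B, hB, hz, hex⟩
    have hMeq : S.Mball z = hcond.choose := by rw [Mball, dif_pos hcond]
    have hspec := hcond.choose_spec
    have : B = S.Mball z := by
      rw [hMeq]
      refine S.ball_unique hB hspec.1 (by rw [hz, hspec.2.1]) ?_ ?_
      · obtain ⟨q, hq, hqz⟩ := hex
        exact ⟨q, hq, by rw [hz]; exact hqz⟩
      · obtain ⟨q, hq, hqz⟩ := hspec.2.2
        exact ⟨q, hq, by rw [hspec.2.1]; exact hqz⟩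
    exact this.le
  · push_neg at hex
    intro p hp
    rw [hex p hp]
    exact S.mem_mball z

noncomputable def lab (z : X) : ℝ := sSup ((fun y => S.d y z) '' S.Mball z)

section Fin2
variable [Finite X]

lemma lab_mem_img (z : X) : ((fun y => S.d y z) '' S.Mball z).Nonempty :=
  ⟨S.d z z, z, S.mem_mball z, rfl⟩

lemma d_le_lab {z y : X} (hy : y ∈ S.Mball z) : S.d y z ≤ S.lab z :=
  le_csSup (Set.Finite.bddAbove (Set.toFinite _)) ⟨y, hy, rfl⟩

lemma lab_nonneg (z : X) : 0 ≤ S.lab z := by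
  have := S.d_le_lab (S.mem_mball z)
  rwa [S.refl0 z] at this

lemma d_eq_lab {z y : X} (hy : y ∈ S.Mball z) (hne : y ≠ z) : S.d y z = S.lab z := by
  refine le_antisymm (S.d_le_lab hy) ?_
  refine csSup_le (S.lab_mem_img z) ?_
  rintro r ⟨w, hw, rfl⟩
  beta_reduce
  by_cases hwz : w = z
  · rw [hwz, S.refl0 z]
    exact S.pos y z
  · have h1 : S.d w z = S.rad (S.Mball z) := by
      have := S.d_ctr (S.mball_isBall z) hw
      rw [S.mball_ctr z] at this
      exact this hwz
    have h2 : S.d y z = S.rad (S.Mball z) := by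
      have := S.d_ctr (S.mball_isBall z) hy
      rw [S.mball_ctr z] at this
      exact this hne
    rw [h1, ← h2]

lemma mball_eq_cball (z : X) : S.Mball z = S.cball z (S.lab z) := by
  refine le_antisymm ?_ ?_
  · intro y hy
    rw [mem_cball, S.dsymm]
    exact S.d_le_lab hy
  · obtain ⟨s, hs0, hseq⟩ := S.ball_eq_cball_of_mem (S.mball_isBall z) (S.mem_mball z)
    have hls : S.lab z ≤ s := by
      refine csSup_le (S.lab_mem_img z) ?_
      rintro r ⟨w, hw, rfl⟩
      beta_reduce
      rw [hseq, mem_cball] at hw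
      rw [S.dsymm]
      exact hw
    rw [hseq]
    exact S.cball_mono hls

lemma lab_le_of_subset {z x : X} {s : ℝ} (h : S.Mball z ⊆ S.cball x s) : S.lab z ≤ s := by
  have hz : z ∈ S.cball x s := h (S.mem_mball z)
  refine csSup_le (S.lab_mem_img z) ?_
  rintro r ⟨w, hw, rfl⟩
  beta_reduce
  exact le_trans (S.ultra w z x) (max_le (by rw [S.dsymm]; exact h hw) hz)

lemma mball_ctr_eq {B : Set X} (hB : S.IsBall B) (h2 : ∃ a ∈ B, ∃ b ∈ B, a ≠ b) :
    S.Mball (S.ctr B) = B := by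
  have hsub : B ⊆ S.Mball (S.ctr B) := S.mball_max hB rfl
  obtain ⟨a, ha, b, hb, hab⟩ := h2
  have hex : ∃ p ∈ B, p ≠ S.ctr B := by
    by_cases hac : a = S.ctr B
    · exact ⟨b, hb, by rw [← hac]; exact (Ne.symm hab)⟩
    · exact ⟨a, ha, hac⟩
  refine (S.ball_unique hB (S.mball_isBall (S.ctr B)) (S.mball_ctr (S.ctr B)).symm hex ?_).symm
  obtain ⟨p, hp, hpne⟩ := hex
  exact ⟨p, hsub hp, by rwa [S.mball_ctr (S.ctr B)]⟩

variable [Nonempty X]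

noncomputable def SX : ℝ := sSup (Set.range fun p : X × X => S.d p.1 p.2)

lemma d_le_SX (a b : X) : S.d a b ≤ S.SX :=
  le_csSup (Set.Finite.bddAbove (Set.toFinite _)) ⟨(a, b), rfl⟩

lemma cball_SX (x : X) : S.cball x S.SX = Set.univ := by
  ext y
  simp [mem_cball, S.d_le_SX x y]

lemma isBall_univ : S.IsBall (Set.univ : Set X) := by
  have x : X := Classical.arbitrary X
  refine ⟨x, S.SX, ?_, (S.cball_SX x).symm⟩
  have := S.d_le_SX x x
  rw [S.refl0 x] at this
  exact this

noncomputable def rho : X := S.ctr Set.univ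

lemma mball_rho : S.Mball S.rho = Set.univ :=
  le_antisymm (fun _ _ => trivial) (S.mball_max S.isBall_univ rfl)

lemma ne_rho_of_mball {z : X} (h : S.Mball z ≠ Set.univ) : z ≠ S.rho := by
  intro hz
  rw [hz, S.mball_rho] at h
  exact h rfl

lemma mball_ne_univ {z : X} (hz : z ≠ S.rho) : S.Mball z ≠ Set.univ := by
  intro h
  apply hz
  have := S.mball_ctr z
  rw [h] at this
  rw [← this, rho]

noncomputable def pr (z : X) : ℝ := sInf ((fun y => S.d y z) '' {y | y ∉ S.Mball z})

noncomputable def Pball (z : X) : Set X := S.cball z (S.pr z)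

noncomputable def par (z : X) : X := S.ctr (S.Pball z)

lemma pr_spec {z : X} (hz : S.Mball z ≠ Set.univ) :
    ∃ y₀, y₀ ∉ S.Mball z ∧ S.d y₀ z = S.pr z := by
  have hne : ((fun y => S.d y z) '' {y | y ∉ S.Mball z}).Nonempty := by
    obtain ⟨y, hy⟩ := (Set.ne_univ_iff_exists_notMem _).1 hz
    exact ⟨S.d y z, y, hy, rfl⟩
  have hfin : ((fun y => S.d y z) '' {y | y ∉ S.Mball z}).Finite := Set.toFinite _
  obtain ⟨y₀, hy₀, heq⟩ := hne.csInf_mem hfin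
  exact ⟨y₀, hy₀, heq⟩

lemma pr_le {z y : X} (hy : y ∉ S.Mball z) : S.pr z ≤ S.d y z :=
  csInf_le (Set.Finite.bddBelow (Set.toFinite _)) ⟨y, hy, rfl⟩

lemma lab_lt_pr {z : X} (hz : S.Mball z ≠ Set.univ) : S.lab z < S.pr z := by
  obtain ⟨y₀, hy₀, heq⟩ := S.pr_spec hz
  rw [S.mball_eq_cball] at hy₀
  have : ¬ S.d z y₀ ≤ S.lab z := hy₀
  push_neg at this
  rw [← heq, S.dsymm]
  exact this

lemma pr_nonneg (z : X) : 0 ≤ S.pr z := by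
  by_cases hne : ((fun y => S.d y z) '' {y | y ∉ S.Mball z}).Nonempty
  · refine le_csInf hne ?_
    rintro r ⟨w, _, rfl⟩
    exact S.pos w z
  · rw [Set.not_nonempty_iff_eq_empty] at hne
    rw [pr, hne, Real.sInf_empty]

lemma self_mem_pball (z : X) : z ∈ S.Pball z := S.mem_cball_self (S.pr_nonneg z)

lemma isBall_pball {z : X} (hz : S.Mball z ≠ Set.univ) : S.IsBall (S.Pball z) := by
  obtain ⟨y₀, hy₀, heq⟩ := S.pr_spec hz
  exact S.isBall_cball (by rw [← heq]; exact S.pos y₀ z)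

lemma mball_ssub_pball {z : X} (hz : S.Mball z ≠ Set.univ) : S.Mball z ⊂ S.Pball z := by
  have hsub : S.Mball z ⊆ S.Pball z := by
    rw [S.mball_eq_cball]
    exact S.cball_mono (le_of_lt (S.lab_lt_pr hz))
  obtain ⟨y₀, hy₀, heq⟩ := S.pr_spec hz
  refine (Set.ssubset_iff_of_subset hsub).2 ⟨y₀, ?_, hy₀⟩
  rw [Pball, mem_cball, S.dsymm, heq]

lemma pball_min {z : X} {B : Set X} (hB : S.IsBall B) (hMB : S.Mball z ⊂ B) :
    S.Pball z ⊆ B := by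
  obtain ⟨s, hs0, rfl⟩ := S.ball_eq_cball_of_mem hB (hMB.subset (S.mem_mball z))
  obtain ⟨y, hyB, hyM⟩ := Set.exists_of_ssubset hMB
  have : S.pr z ≤ s := le_trans (S.pr_le hyM) (by rw [S.dsymm]; exact hyB)
  exact S.cball_mono this

lemma par_rho : S.par S.rho = S.rho := by
  have hO : ({y | y ∉ S.Mball S.rho} : Set X) = ∅ := by
    rw [S.mball_rho]; simp
  have hpr : S.pr S.rho = 0 := by
    rw [pr, hO]
    simp [Real.sInf_empty]
  have hP : S.Pball S.rho = {S.rho} := by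
    rw [Pball, hpr]
    ext y
    simp only [mem_cball, Set.mem_singleton_iff]
    constructor
    · intro h
      exact ((S.zero _ y).1 (le_antisymm h (S.pos _ y))).symm
    · rintro rfl
      exact le_of_eq (S.refl0 _)
  rw [par, hP, S.ctr_singleton]

lemma exists_ne_ctr {B : Set X} {a b : X} (ha : a ∈ B) (hb : b ∈ B) (hab : a ≠ b) :
    ∃ p ∈ B, p ≠ S.ctr B := by
  by_cases h : a = S.ctr B
  · exact ⟨b, hb, by rw [← h]; exact hab.symm⟩
  · exact ⟨a, ha, h⟩

lemma par_ne {z : X} (hz : z ≠ S.rho) : S.par z ≠ z := by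
  intro h
  have hsub : S.Pball z ⊆ S.Mball z := S.mball_max (S.isBall_pball (S.mball_ne_univ hz)) h
  have hss := S.mball_ssub_pball (S.mball_ne_univ hz)
  exact hss.2 hsub

lemma mball_par {z : X} (hz : z ≠ S.rho) : S.Mball (S.par z) = S.Pball z := by
  have hMz := S.mball_ne_univ hz
  have hPB := S.isBall_pball hMz
  obtain ⟨y₀, hy₀M, heq⟩ := S.pr_spec hMz
  have hzP : z ∈ S.Pball z := S.self_mem_pball z
  have hy₀P : y₀ ∈ S.Pball z := by rw [Pball, mem_cball, S.dsymm, heq]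
  have hy₀z : y₀ ≠ z := fun h => hy₀M (h ▸ S.mem_mball z)
  have hsub : S.Pball z ⊆ S.Mball (S.par z) := S.mball_max hPB rfl
  refine (S.ball_unique hPB (S.mball_isBall (S.par z)) (by rw [S.mball_ctr]; rfl) ?_ ?_).symm
  · exact S.exists_ne_ctr hzP hy₀P (Ne.symm hy₀z)
  · exact S.exists_ne_ctr (hsub hzP) (hsub hy₀P) (Ne.symm hy₀z)

lemma mball_ssub_par {z : X} (hz : z ≠ S.rho) : S.Mball z ⊂ S.Mball (S.par z) := by
  rw [S.mball_par hz]
  exact S.mball_ssub_pball (S.mball_ne_univ hz)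

lemma d_par {z : X} (hz : z ≠ S.rho) : S.d z (S.par z) = S.lab (S.par z) := by
  refine S.d_eq_lab ?_ (Ne.symm (S.par_ne hz))
  rw [S.mball_par hz]
  exact S.self_mem_pball z

noncomputable def tree : SimpleGraph X where
  Adj u v := u ≠ v ∧ ((u ≠ S.rho ∧ S.par u = v) ∨ (v ≠ S.rho ∧ S.par v = u))
  symm := by
    refine ⟨fun u v h => ?_⟩
    exact ⟨h.1.symm, h.2.symm⟩
  loopless := by
    refine ⟨fun u h => ?_⟩
    exact h.1 rfl

noncomputable def rank (z : X) : ℕ := (S.Mball z).ncard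

lemma rank_lt_par {z : X} (hz : z ≠ S.rho) : S.rank z < S.rank (S.par z) :=
  Set.ncard_lt_ncard (S.mball_ssub_par hz) (Set.toFinite _)

lemma adj_par {z : X} (hz : z ≠ S.rho) : S.tree.Adj z (S.par z) :=
  ⟨(S.par_ne hz).symm, Or.inl ⟨hz, rfl⟩⟩

lemma mball_ssub_ball {B : Set X} {z : X} (hB : S.IsBall B)
    (h2 : ∃ a ∈ B, ∃ b ∈ B, a ≠ b) (hzB : z ∈ B) (hzc : z ≠ S.ctr B) : S.Mball z ⊂ B := by
  have hMsub : S.Mball z ⊆ B := by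
    rcases S.ball_nested (S.mball_isBall z) hB ⟨z, S.mem_mball z, hzB⟩ with h | h
    · exact h
    · obtain ⟨s, hs0, hBeq⟩ := S.ball_eq_cball_of_mem hB hzB
      have hlab : S.lab z ≤ s := by
        by_contra hcon
        push_neg at hcon
        obtain ⟨a, ha, b, hb, hab⟩ := h2
        have hp : ∃ p ∈ B, p ≠ z := by
          by_cases haz : a = z
          · exact ⟨b, hb, by rw [← haz]; exact hab.symm⟩
          · exact ⟨a, ha, haz⟩
        obtain ⟨p, hpB, hpz⟩ := hp
        have h1 : S.d p z = S.lab z := S.d_eq_lab (h hpB) hpz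
        have h2' : S.d z p ≤ s := by rw [hBeq] at hpB; exact hpB
        rw [S.dsymm, h1] at h2'
        linarith
      rw [S.mball_eq_cball, hBeq]
      exact S.cball_mono hlab
  refine hMsub.ssubset_of_ne ?_
  intro heq
  apply hzc
  rw [← heq, S.mball_ctr]

lemma climb (n : ℕ) (B : Set X) (hB : S.IsBall B) (h2 : ∃ a ∈ B, ∃ b ∈ B, a ≠ b) :
    ∀ z, z ∈ B → B.ncard - (S.Mball z).ncard ≤ n →
    ∃ p : S.tree.Walk z (S.ctr B), p.IsPath ∧
      ∀ a ∈ p.support, S.Mball z ⊆ S.Mball a ∧ S.Mball a ⊆ B := by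
  induction n with
  | zero =>
    intro z hzB hn
    by_cases hzc : z = S.ctr B
    · subst hzc
      refine ⟨SimpleGraph.Walk.nil, SimpleGraph.Walk.IsPath.nil, ?_⟩
      intro a ha
      rw [SimpleGraph.Walk.support_nil, List.mem_singleton] at ha
      subst ha
      exact ⟨subset_rfl, by rw [S.mball_ctr_eq hB h2]⟩
    · exfalso
      have hss : S.Mball z ⊂ B := S.mball_ssub_ball hB h2 hzB hzc
      have := Set.ncard_lt_ncard hss (Set.toFinite _)
      omega
  | succ n ih =>
    intro z hzB hn
    by_cases hzc : z = S.ctr B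
    · subst hzc
      refine ⟨SimpleGraph.Walk.nil, SimpleGraph.Walk.IsPath.nil, ?_⟩
      intro a ha
      rw [SimpleGraph.Walk.support_nil, List.mem_singleton] at ha
      subst ha
      exact ⟨subset_rfl, by rw [S.mball_ctr_eq hB h2]⟩
    · have hss : S.Mball z ⊂ B := S.mball_ssub_ball hB h2 hzB hzc
      have hzrho : z ≠ S.rho := by
        refine S.ne_rho_of_mball ?_
        intro h
        rw [h] at hss
        exact hss.2 (Set.subset_univ B)
      have hMP : S.Mball (S.par z) = S.Pball z := S.mball_par hzrho
      have hPB : S.Mball (S.par z) ⊆ B := by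
        rw [hMP]
        exact S.pball_min hB hss
      have hparB : S.par z ∈ B := hPB (S.mem_mball (S.par z))
      have hrank : (S.Mball z).ncard < (S.Mball (S.par z)).ncard :=
        Set.ncard_lt_ncard (S.mball_ssub_par hzrho) (Set.toFinite _)
      have hcard : (S.Mball (S.par z)).ncard ≤ B.ncard :=
        Set.ncard_le_ncard hPB (Set.toFinite _)
      obtain ⟨p', hp', hinv⟩ := ih (S.par z) hparB (by omega)
      have hznot : z ∉ p'.support := by
        intro hmem
        have h1 := (hinv z hmem).1
        have h2' := S.mball_ssub_par hzrho
        have := subset_antisymm h2'.subset h1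
        exact h2'.ne this
      refine ⟨SimpleGraph.Walk.cons (S.adj_par hzrho) p', hp'.cons hznot, ?_⟩
      intro a ha
      rw [SimpleGraph.Walk.support_cons, List.mem_cons] at ha
      rcases ha with rfl | ha
      · exact ⟨subset_rfl, hss.subset⟩
      · exact ⟨le_trans (S.mball_ssub_par hzrho).subset (hinv a ha).1, (hinv a ha).2⟩

lemma tree_connected (h2 : ∃ a b : X, a ≠ b) : S.tree.Connected := by
  have h2' : ∃ a ∈ (Set.univ : Set X), ∃ b ∈ (Set.univ : Set X), a ≠ b := by
    obtain ⟨a, b, hab⟩ := h2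
    exact ⟨a, trivial, b, trivial, hab⟩
  have hreach : ∀ z : X, S.tree.Reachable z S.rho := by
    intro z
    obtain ⟨p, _, _⟩ := S.climb (Set.univ : Set X).ncard Set.univ S.isBall_univ h2' z trivial
      (Nat.sub_le _ _)
    exact ⟨p⟩
  constructor
  intro u v
  exact (hreach u).trans (hreach v).symm

end Fin2
end USetup

lemma end_mem_support_tail {X : Type*} {G : SimpleGraph X} {u v : X} (p : G.Walk u v)
    (h : ¬p.Nil) : v ∈ p.support.tail := by
  cases p with
  | nil => simp at h
  | cons hadj q => simpa using q.end_mem_support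

namespace USetup
variable {X : Type*} (S : USetup X)
section Fin3
variable [Finite X] [Nonempty X]

lemma tree_acyclic : S.tree.IsAcyclic := by
  classical
  intro v c hc
  set χ : S.tree.Dart → X := fun e => if S.par e.fst = e.snd then e.fst else e.snd with hχ
  have dart_struct : ∀ e : S.tree.Dart, (χ e ≠ S.rho) ∧
      (S.par (χ e) = e.fst ∨ S.par (χ e) = e.snd) ∧ e.edge = s(χ e, S.par (χ e)) := by
    intro e
    obtain ⟨hne, hcase⟩ := e.adj
    by_cases h : S.par e.fst = e.snd
    · have hχe : χ e = e.fst := by rw [hχ]; simp [h]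
      have hfst : e.fst ≠ S.rho := by
        rcases hcase with ⟨h1, _⟩ | ⟨h1, hp2⟩
        · exact h1
        · exfalso
          by_cases hf : e.fst = S.rho
          · rw [hf, S.par_rho] at h
            exact h1 h.symm
          · have r1 := S.rank_lt_par hf
            have r2 := S.rank_lt_par h1
            rw [h] at r1
            rw [hp2] at r2
            omega
      refine ⟨by rw [hχe]; exact hfst, ?_, ?_⟩
      · rw [hχe, h]; right; rfl
      · rw [hχe, h]; rfl
    · have h2 : e.snd ≠ S.rho ∧ S.par e.snd = e.fst := by
        rcases hcase with ⟨_, hp⟩ | h2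
        · exact absurd hp h
        · exact h2
      have hχe : χ e = e.snd := by rw [hχ]; simp [h]
      refine ⟨by rw [hχe]; exact h2.1, ?_, ?_⟩
      · rw [hχe, h2.2]; left; rfl
      · rw [hχe, h2.2]
        exact (Sym2.eq_swap).trans rfl
  have hedges : c.edges.Nodup := hc.edges_nodup
  have hpw : c.darts.Pairwise (fun e f => e.edge ≠ f.edge) := List.pairwise_map.mp hedges
  have hLnodup : (c.darts.map χ).Nodup := by
    refine List.pairwise_map.mpr (hpw.imp ?_)
    intro e f hef hchi
    apply hef
    rw [(dart_struct e).2.2, (dart_struct f).2.2, hchi]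
  have hcnil : ¬c.Nil := hc.not_nil
  have hvtail : v ∈ c.support.tail := end_mem_support_tail c hcnil
  have hsupmem : ∀ x ∈ c.support, x ∈ c.support.tail := by
    intro x hx
    rw [c.support_eq_cons, List.mem_cons] at hx
    rcases hx with rfl | hx
    · exact hvtail
    · exact hx
  have hdartmem : ∀ e ∈ c.darts, e.fst ∈ c.support.tail ∧ e.snd ∈ c.support.tail := by
    intro e he
    exact ⟨hsupmem _ (SimpleGraph.Walk.dart_fst_mem_support_of_mem_darts _ he),
      hsupmem _ (SimpleGraph.Walk.dart_snd_mem_support_of_mem_darts _ he)⟩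
  have hLlen : (c.darts.map χ).length = c.length := by
    simp [SimpleGraph.Walk.length_darts]
  have htail_nodup : c.support.tail.Nodup := hc.support_nodup
  have htail_len : c.support.tail.length = c.length := by
    have h1 := c.length_support
    have h2 : c.support.length = c.support.tail.length + 1 := by
      rw [c.support_eq_cons]; simp
    omega
  have hsub : (c.darts.map χ).toFinset ⊆ c.support.tail.toFinset := by
    intro x hx
    rw [List.mem_toFinset] at hx ⊢
    obtain ⟨e, he, rfl⟩ := List.mem_map.1 hx
    rw [hχ]
    by_cases h : S.par e.fst = e.snd
    · simp only [h, if_pos]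
      simpa [h] using (hdartmem e he).1
    · simpa [h] using (hdartmem e he).2
  have hcard1 : (c.darts.map χ).toFinset.card = c.length := by
    rw [List.toFinset_card_of_nodup hLnodup, hLlen]
  have hcard2 : c.support.tail.toFinset.card = c.length := by
    rw [List.toFinset_card_of_nodup htail_nodup, htail_len]
  have hfeq : (c.darts.map χ).toFinset = c.support.tail.toFinset :=
    Finset.eq_of_subset_of_card_le hsub (by rw [hcard1, hcard2])
  obtain ⟨w, hw, hwmax⟩ := Finset.exists_max_image c.support.tail.toFinset S.rank
    ⟨v, List.mem_toFinset.2 hvtail⟩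
  have hwL : w ∈ (c.darts.map χ).toFinset := by rw [hfeq]; exact hw
  obtain ⟨e, he, hew⟩ := List.mem_map.1 (List.mem_toFinset.1 hwL)
  obtain ⟨hrho, hpar, _⟩ := dart_struct e
  rw [hew] at hrho hpar
  have hparmem : S.par w ∈ c.support.tail.toFinset := by
    rcases hpar with h | h
    · rw [h]; exact List.mem_toFinset.2 (hdartmem e he).1
    · rw [h]; exact List.mem_toFinset.2 (hdartmem e he).2
  have hlt := S.rank_lt_par hrho
  have hle := hwmax _ hparmem
  omega

lemma gen_exists (u v : X) (huv : u ≠ v) :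
    ∃ p : S.tree.Walk u v, p.IsPath ∧ walkMax S.lab p = S.d u v := by
  set t := S.d u v with ht
  have ht0 : 0 ≤ t := S.pos u v
  set B := S.cball u t with hBdef
  have hB : S.IsBall B := S.isBall_cball ht0
  have hu : u ∈ B := S.mem_cball_self ht0
  have hv : v ∈ B := le_refl t
  have htwo : ∃ a ∈ B, ∃ b ∈ B, a ≠ b := ⟨u, hu, v, hv, huv⟩
  set w := S.ctr B with hwdef
  have hM : S.Mball w = B := S.mball_ctr_eq hB htwo
  have hlabw : S.lab w = t := by
    by_cases huw : u = w
    · have hvw : v ≠ w := by rw [← huw]; exact (Ne.symm huv)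
      have h1 : S.d v w = S.lab w := S.d_eq_lab (by rw [hM]; exact hv) hvw
      rw [← h1, ← huw, S.dsymm]
    · have h1 : S.d u w = S.lab w := S.d_eq_lab (by rw [hM]; exact hu) huw
      have h2 : S.d u w ≤ t := S.ctr_mem hB
      by_cases hvw : v = w
      · rw [← h1, ← hvw]
      · have h3 : S.d v w = S.lab w := S.d_eq_lab (by rw [hM]; exact hv) hvw
        have h4 : t ≤ max (S.d u w) (S.d w v) := S.ultra u v w
        have h5 : S.d w v = S.d u w := by rw [S.dsymm, h3, h1]
        rw [h5, max_self] at h4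
        rw [← h1]
        exact le_antisymm h2 h4
  obtain ⟨p1, hp1, hi1⟩ := S.climb B.ncard B hB htwo u hu (Nat.sub_le _ _)
  obtain ⟨p2, hp2, hi2⟩ := S.climb B.ncard B hB htwo v hv (Nat.sub_le _ _)
  have hmid : ∀ a, a ∈ p1.support → a ∈ p2.support → a = w := by
    intro a h1 h2
    have hua : u ∈ S.Mball a := (hi1 a h1).1 (S.mem_mball u)
    have hva : v ∈ S.Mball a := (hi2 a h2).1 (S.mem_mball v)
    have hBsub : B ⊆ S.Mball a := S.cball_subset_ball (S.mball_isBall a) hua hva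
    have hMa : S.Mball a = B := le_antisymm (hi1 a h1).2 hBsub
    calc a = S.ctr (S.Mball a) := (S.mball_ctr a).symm
    _ = S.ctr B := by rw [hMa]
  refine ⟨p1.append p2.reverse, ?_, ?_⟩
  · apply SimpleGraph.Walk.IsPath.mk'
    rw [SimpleGraph.Walk.support_append]
    refine List.Nodup.append hp1.support_nodup
      (List.Nodup.sublist (List.tail_sublist _) hp2.reverse.support_nodup) ?_
    intro a ha1 ha2
    have ha2' : a ∈ p2.reverse.support := List.mem_of_mem_tail ha2
    rw [SimpleGraph.Walk.support_reverse, List.mem_reverse] at ha2'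
    have haw : a = w := hmid a ha1 ha2'
    subst haw
    have hnodup := hp2.reverse.support_nodup
    rw [p2.reverse.support_eq_cons] at hnodup
    exact (List.nodup_cons.1 hnodup).1 ha2
  · refine le_antisymm ?_ ?_
    · refine walkMax_le _ ht0 ?_
      intro a ha
      rw [SimpleGraph.Walk.mem_support_append_iff] at ha
      have haB : S.Mball a ⊆ B := by
        rcases ha with ha | ha
        · exact (hi1 a ha).2
        · rw [SimpleGraph.Walk.support_reverse, List.mem_reverse] at ha
          exact (hi2 a ha).2
      exact S.lab_le_of_subset haB
    · have hw1 : w ∈ (p1.append p2.reverse).support :=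
        SimpleGraph.Walk.subset_support_append_left _ _ p1.end_mem_support
      have := le_walkMax S.lab hw1
      rwa [hlabw] at this

lemma tree_isTree (h2 : ∃ a b : X, a ≠ b) : S.tree.IsTree :=
  ⟨S.tree_connected h2, S.tree_acyclic⟩

lemma generatedBy (h2 : ∃ a b : X, a ≠ b) : GeneratedBy S.d S.tree S.lab := by
  refine ⟨S.tree_isTree h2, S.lab_nonneg, S.refl0, ?_⟩
  intro u v huv p hp
  obtain ⟨p0, hp0, hmax⟩ := S.gen_exists u v huv
  have hpath_unique := SimpleGraph.isAcyclic_iff_path_unique.mp S.tree_acyclic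
  have : (⟨p, hp⟩ : S.tree.Path u v) = ⟨p0, hp0⟩ := hpath_unique _ _
  have hpp : p = p0 := congrArg Subtype.val this
  rw [hpp, hmax]

end Fin3
end USetup
end Backward

/-- A finite nonempty ultrametric space belongs to UGVL iff every open ball is a
centered sphere. -/
theorem stmt_13 {X : Type*} [Finite X] (hne : Nonempty X)
    (d : X → X → ℝ) (hd : IsUltrametricOn d) :
    IsUGVL d ↔ ∀ B : Set X, IsOpenBallOf d B → IsCenteredSphereOf d B := by
  haveI := hne
  constructor
  · intro hU B hB
    exact forward_dir d hd hU B hB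
  · intro H
    unfold IsUGVL
    classical
    obtain ⟨hpos, hsymm, hzero, hmax⟩ := hd
    by_cases h2 : ∃ a b : X, a ≠ b
    · have hrad : ∀ s : ℝ, ∃ r, s < r ∧ ∀ a b : X, d a b < r → d a b ≤ s := by
        intro s
        set V : Set ℝ := Set.range (fun p : X × X => d p.1 p.2) ∩ {v | s < v} with hV
        have hVfin : V.Finite := (Set.finite_range _).inter_of_left _
        by_cases hvne : V.Nonempty
        · refine ⟨sInf V, (hvne.csInf_mem hVfin).2, ?_⟩
          intro a b hab
          by_contra hcon
          push_neg at hcon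
          exact absurd (csInf_le hVfin.bddBelow ⟨⟨(a, b), rfl⟩, hcon⟩) (not_le.2 hab)
        · refine ⟨s + 1, by linarith, ?_⟩
          intro a b _
          by_contra hcon
          push_neg at hcon
          exact hvne ⟨d a b, ⟨(a, b), rfl⟩, hcon⟩
      have hch : ∀ B : Set X, ∃ c r',
          (∃ x s, 0 ≤ s ∧ B = {y | d x y ≤ s}) →
          (c ∈ B ∧ 0 ≤ r' ∧ B = {x | d x c = r'} ∪ {c}) := by
        intro B
        by_cases hB : ∃ x s, 0 ≤ s ∧ B = {y | d x y ≤ s}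
        · obtain ⟨x, s, hs, hBeq⟩ := hB
          obtain ⟨r, hsr, hr⟩ := hrad s
          have hOB : IsOpenBallOf d B := by
            refine ⟨x, r, lt_of_le_of_lt hs hsr, ?_⟩
            rw [hBeq]
            ext y
            constructor
            · intro hy
              exact lt_of_le_of_lt hy hsr
            · intro hy
              exact hr x y hy
          obtain ⟨c, hc, r', hr', heq⟩ := H B hOB
          exact ⟨c, r', fun _ => ⟨hc, hr', heq⟩⟩
        · exact ⟨hne.some, 0, fun hcon => absurd hcon hB⟩
      choose cf rf hcf using hch
      set S : USetup X := ⟨d, cf, rf, hpos, hsymm, hzero, hmax, fun B hB => hcf B hB⟩ with hS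
      exact ⟨S.tree, S.lab, S.generatedBy h2⟩
    · push_neg at h2
      refine ⟨⊥, fun _ => 0, ?_⟩
      rw [GeneratedBy]
      refine ⟨⟨SimpleGraph.Connected.mk ?_, SimpleGraph.isAcyclic_bot⟩, fun _ => le_refl 0,
        fun u => (hzero u u).2 rfl, ?_⟩
      · intro u v
        exact (h2 u v) ▸ SimpleGraph.Reachable.refl u
      · intro u v huv _ _
        exact absurd (h2 u v) huv
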